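/- Let (R, m) be a local ring and let I be an ideal of R with depth(R/I) = 0 that is weakly m-full, i.e., there exists an ideal J of R with I = J : m. Then I is a Burch ideal, meaning m(I : m) ≠ mI. -/
import Mathlib

open IsLocalRing

/-- Over a Noetherian local ring `(R, m)`, a weakly `m`-full ideal `I`
(i.e. `I = J : m` for some ideal `J`) which is proper and satisfies `depth R/I = 0`
(i.e. `(I : m) ≠ I`) is a Burch ideal, i.e. `m(I : m) ≠ mI`. -/
theorem weakly_m_full_is_burch {R : Type*} [CommRing R] [IsNoetherianRing R] [IsLocalRing R]
    (I J : Ideal R) (hIproper : I ≠ ⊤)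
    (hdepth : Submodule.colon I (maximalIdeal R) ≠ I)
    (hwf : I = Submodule.colon J (maximalIdeal R)) :
    maximalIdeal R * Submodule.colon I (maximalIdeal R) ≠ maximalIdeal R * I := by
  intro h
  apply hdepth
  have hsub : maximalIdeal R * I ≤ J := by
    rw [hwf, Ideal.mul_le]
    intro r hr s hs
    have := Submodule.mem_colon.mp hs r hr
    simpa [smul_eq_mul, mul_comm] using this
  apply le_antisymm
  · intro x hx
    rw [hwf, Submodule.mem_colon]
    intro t ht
    have htx : t * x ∈ maximalIdeal R * Submodule.colon I (maximalIdeal R) :=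
      Ideal.mul_mem_mul ht hx
    rw [h] at htx
    have := hsub htx
    simpa [smul_eq_mul, mul_comm] using this
  · intro x hx
    exact Submodule.mem_colon.mpr fun p hp => I.mul_mem_right p hx
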